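/- For the two-dimensional XOR rule s^{t+1}(c_{i,j}) = s^t(c_{i-1,j}) ⊕ s^t(c_{i+1,j}) ⊕ s^t(c_{i,j-1}) ⊕ s^t(c_{i,j+1}) on the 2×2 region ω = {c_{1,1}, c_{1,2}, c_{2,1}, c_{2,2}} with all 12 boundary cells freely controllable, the system is regionally controllable in one step: for every initial configuration x on ω and every desired configuration y on ω there exist boundary values realizing y after one step. -/
import Mathlib


/-- The 2D XOR rule on the inner 2×2 region of a 4×4 grid, with the 12 outer
cells freely controllable, is regionally controllable in one step. -/
theorem xor2D_one_step_controllable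
    (x y : Fin 2 → Fin 2 → ZMod 2) :
    ∃ g : Fin 4 → Fin 4 → ZMod 2,
      (∀ i j : Fin 2, g i.succ.castSucc j.succ.castSucc = x i j) ∧
      (∀ i j : Fin 2,
        y i j = g i.castSucc.castSucc j.succ.castSucc
          + g i.succ.succ j.succ.castSucc
          + g i.succ.castSucc j.castSucc.castSucc
          + g i.succ.castSucc j.succ.succ) := by
  refine ⟨fun a b =>
    match a.val, b.val with
    | 1, 1 => x 0 0
    | 1, 2 => x 0 1
    | 2, 1 => x 1 0
    | 2, 2 => x 1 1
    | 0, 1 => y 0 0 + x 1 0 + x 0 1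
    | 0, 2 => y 0 1 + x 1 1 + x 0 0
    | 3, 1 => y 1 0 + x 0 0 + x 1 1
    | 3, 2 => y 1 1 + x 0 1 + x 1 0
    | _, _ => 0, ?_, ?_⟩ <;>
  · intro i j
    fin_cases i <;> fin_cases j <;>
      simp [Fin.coe_castSucc, Fin.val_succ] <;> ring_nf <;>
      first
      | rfl
      | (rw [show ((2:ZMod 2) = 0) from rfl]; ring)
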